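/- Suppose for each n, s^n = (s^n_A, s^n_B, s^n_C) ∈ S maximizes π(·, H_n, d_n) over S, where (H_n) is a sequence of Borel probability measures on ℝ² converging weakly to H and (d_n) is a sequence of reals converging to d. Then s^n_A → (1+d)/2, max{s^n_B, s^n_C} → (1−d)/2, and min{s^n_B, s^n_C} → 0; that is, the optimal offers converge (up to swapping the two non-proposers) to ((1+d)/2, (1−d)/2, 0). -/

import Mathlib

open MeasureTheory Filter

noncomputable section

/-- The unit simplex of offers `(s_A, s_B, s_C)`. -/
def SimplexS : Set (ℝ × ℝ × ℝ) :=
  {s | 0 ≤ s.1 ∧ 0 ≤ s.2.1 ∧ 0 ≤ s.2.2 ∧ s.1 + s.2.1 + s.2.2 = 1}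

/-- Acceptance probability `Λ(b, c, G) = G({(τB, τC) : τB ≤ b or τC ≤ c})`. -/
def Lam (b c : ℝ) (G : Measure (ℝ × ℝ)) : ℝ :=
  (G {p : ℝ × ℝ | p.1 ≤ b ∨ p.2 ≤ c}).toReal

/-- Joint CDF `G(x, y) = G((−∞, x] × (−∞, y])`. -/
def jointCDF (G : Measure (ℝ × ℝ)) (x y : ℝ) : ℝ :=
  (G (Set.Iic x ×ˢ Set.Iic y)).toReal

/-- Proposer's expected payoff `π(s, G, d) = d + (s_A − d)·Λ(s_B, s_C, G)`. -/
def pay (s : ℝ × ℝ × ℝ) (G : Measure (ℝ × ℝ)) (d : ℝ) : ℝ :=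
  d + (s.1 - d) * Lam s.2.1 s.2.2 G

/-- Modified payoff `π̂(s, G, d) = d + max{s_A − d, 0}·Λ(s_B, s_C, G)`. -/
def payHat (s : ℝ × ℝ × ℝ) (G : Measure (ℝ × ℝ)) (d : ℝ) : ℝ :=
  d + max (s.1 - d) 0 * Lam s.2.1 s.2.2 G

/-- The uniform distribution on `[0, τ]`. -/
def uniformIcc (τ : ℝ) : Measure ℝ :=
  (ENNReal.ofReal τ)⁻¹ • volume.restrict (Set.Icc 0 τ)

/-- Weak convergence of measures: convergence of integrals of all bounded continuous
functions. -/
def WeakLim (Hn : ℕ → Measure (ℝ × ℝ)) (H : Measure (ℝ × ℝ)) : Prop :=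
  ∀ f : BoundedContinuousFunction (ℝ × ℝ) ℝ,
    Tendsto (fun n => ∫ p, f p ∂(Hn n)) atTop (nhds (∫ p, f p ∂H))

/-! ### Auxiliary lemmas -/

lemma uniformIcc_Iic {τ b : ℝ} (hτ : 0 < τ) :
    uniformIcc τ (Set.Iic b) = ENNReal.ofReal (min b τ / τ) := by
  rw [uniformIcc, Measure.smul_apply, Measure.restrict_apply measurableSet_Iic]
  have h : Set.Iic b ∩ Set.Icc 0 τ = Set.Icc 0 (min b τ) := by
    ext x
    simp only [Set.mem_inter_iff, Set.mem_Iic, Set.mem_Icc, le_min_iff]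
    constructor
    · rintro ⟨h1, h2, h3⟩; exact ⟨h2, h1, h3⟩
    · rintro ⟨h1, h2, h3⟩; exact ⟨h2, h1, h3⟩
  rw [h, Real.volume_Icc, smul_eq_mul, sub_zero, ENNReal.ofReal_div_of_pos hτ,
      div_eq_mul_inv, mul_comm]

lemma uniformIcc_Iio {τ b : ℝ} (hτ : 0 < τ) (hb : 0 ≤ b) (hbτ : b ≤ τ) :
    uniformIcc τ (Set.Iio b) = ENNReal.ofReal (b / τ) := by
  rw [uniformIcc, Measure.smul_apply, Measure.restrict_apply measurableSet_Iio]
  have h : Set.Iio b ∩ Set.Icc 0 τ = Set.Ico 0 b := by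
    ext x
    simp only [Set.mem_inter_iff, Set.mem_Iio, Set.mem_Icc, Set.mem_Ico]
    constructor
    · rintro ⟨h1, h2, h3⟩; exact ⟨h2, h1⟩
    · rintro ⟨h1, h2⟩; exact ⟨h2, h1, le_trans h2.le hbτ⟩
  rw [h, Real.volume_Ico, smul_eq_mul, sub_zero, ENNReal.ofReal_div_of_pos hτ,
      div_eq_mul_inv, mul_comm]

lemma H_fst_Iic {H : Measure (ℝ × ℝ)} {τ : ℝ} (hmarg1 : H.map Prod.fst = uniformIcc τ) (b : ℝ) :
    H {p : ℝ × ℝ | p.1 ≤ b} = uniformIcc τ (Set.Iic b) := by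
  rw [← hmarg1, Measure.map_apply measurable_fst measurableSet_Iic]; rfl

lemma H_snd_Iic {H : Measure (ℝ × ℝ)} {τ : ℝ} (hmarg2 : H.map Prod.snd = uniformIcc τ) (c : ℝ) :
    H {p : ℝ × ℝ | p.2 ≤ c} = uniformIcc τ (Set.Iic c) := by
  rw [← hmarg2, Measure.map_apply measurable_snd measurableSet_Iic]; rfl

lemma H_fst_Iio {H : Measure (ℝ × ℝ)} {τ : ℝ} (hmarg1 : H.map Prod.fst = uniformIcc τ) (b : ℝ) :
    H {p : ℝ × ℝ | p.1 < b} = uniformIcc τ (Set.Iio b) := by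
  rw [← hmarg1, Measure.map_apply measurable_fst measurableSet_Iio]; rfl

/-- The key inclusion-exclusion bound: `τ · Λ(b,c,H) ≤ b + c − τ · H(m,m)` with `m = min b c`. -/
lemma Lam_upper {τ : ℝ} (hτ0 : 0 < τ) {H : Measure (ℝ × ℝ)} (hHprob : IsProbabilityMeasure H)
    (hmarg1 : H.map Prod.fst = uniformIcc τ) (hmarg2 : H.map Prod.snd = uniformIcc τ)
    {b c : ℝ} (hb : 0 ≤ b) (hc : 0 ≤ c) :
    τ * Lam b c H ≤ b + c - τ * jointCDF H (min b c) (min b c) := by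
  haveI := hHprob
  set A : Set (ℝ × ℝ) := {p | p.1 ≤ b} with hA
  set B : Set (ℝ × ℝ) := {p | p.2 ≤ c} with hB
  have hBmeas : MeasurableSet B := measurable_snd measurableSet_Iic
  have hU : {p : ℝ × ℝ | p.1 ≤ b ∨ p.2 ≤ c} = A ∪ B := rfl
  have hIE : H (A ∪ B) + H (A ∩ B) = H A + H B := measure_union_add_inter A hBmeas
  have hsub : Set.Iic (min b c) ×ˢ Set.Iic (min b c) ⊆ A ∩ B := by
    rintro ⟨x, y⟩ ⟨hx, hy⟩
    simp only [Set.mem_Iic] at hx hy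
    exact ⟨show x ≤ b from le_trans hx (min_le_left _ _),
           show y ≤ c from le_trans hy (min_le_right _ _)⟩
  have hmono : jointCDF H (min b c) (min b c) ≤ (H (A ∩ B)).toReal :=
    ENNReal.toReal_mono (measure_ne_top H _) (measure_mono hsub)
  have hIE' : (H (A ∪ B)).toReal + (H (A ∩ B)).toReal = (H A).toReal + (H B).toReal := by
    have := congrArg ENNReal.toReal hIE
    rwa [ENNReal.toReal_add (measure_ne_top H _) (measure_ne_top H _),
         ENNReal.toReal_add (measure_ne_top H _) (measure_ne_top H _)] at this
  have hAval : (H A).toReal = min b τ / τ := by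
    rw [hA, H_fst_Iic hmarg1, uniformIcc_Iic hτ0, ENNReal.toReal_ofReal]
    positivity
  have hBval : (H B).toReal = min c τ / τ := by
    rw [hB, H_snd_Iic hmarg2, uniformIcc_Iic hτ0, ENNReal.toReal_ofReal]
    positivity
  have hLam : Lam b c H = (H (A ∪ B)).toReal := by rw [Lam, hU]
  have h1 : τ * ((H A).toReal) ≤ b := by
    rw [hAval, mul_div_cancel₀ _ (ne_of_gt hτ0)]
    exact min_le_left _ _
  have h2 : τ * ((H B).toReal) ≤ c := by
    rw [hBval, mul_div_cancel₀ _ (ne_of_gt hτ0)]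
    exact min_le_left _ _
  have h3 : τ * jointCDF H (min b c) (min b c) ≤ τ * (H (A ∩ B)).toReal :=
    mul_le_mul_of_nonneg_left hmono hτ0.le
  nlinarith [hIE']

/-- Uniqueness of the maximizer: any offer whose modified payoff reaches the optimal value
`d + (1-d)²/(4τ)` must be `((1+d)/2, (1-d)/2, 0)` up to swapping the two non-proposers. -/
lemma unique_max
    {τ : ℝ} (hτ : 1 / 2 ≤ τ)
    {H : Measure (ℝ × ℝ)} (hHprob : IsProbabilityMeasure H)
    (hmarg1 : H.map Prod.fst = uniformIcc τ)
    (hmarg2 : H.map Prod.snd = uniformIcc τ)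
    (hA1 : ∀ x > (0 : ℝ), 0 < jointCDF H x x)
    {d : ℝ} (hd0 : 0 ≤ d) (hd1 : d < 1)
    {s : ℝ × ℝ × ℝ} (hs : s ∈ SimplexS)
    (hkey : d + (1 - d) ^ 2 / (4 * τ) ≤ payHat s H d) :
    s.1 = (1 + d) / 2 ∧ max s.2.1 s.2.2 = (1 - d) / 2 ∧ min s.2.1 s.2.2 = 0 := by
  obtain ⟨hA, hB, hC, hsum⟩ := hs
  have hτ0 : (0 : ℝ) < τ := by linarith
  set a := s.1 with ha
  set b := s.2.1 with hb
  set c := s.2.2 with hc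
  have hMpos : 0 < (1 - d) ^ 2 / (4 * τ) := by
    apply div_pos (by nlinarith) (by linarith)
  set J := jointCDF H (min b c) (min b c) with hJ
  have hJ0 : 0 ≤ J := ENNReal.toReal_nonneg
  have hΛ0 : 0 ≤ Lam b c H := ENNReal.toReal_nonneg
  have hbound := Lam_upper hτ0 hHprob hmarg1 hmarg2 hB hC
  rw [payHat] at hkey
  by_cases hud : a - d ≤ 0
  · exfalso
    rw [max_eq_right hud] at hkey
    simp at hkey
    linarith
  push_neg at hud
  rw [max_eq_left hud.le] at hkey
  set u := a - d with hu
  have hkey' : (1 - d) ^ 2 ≤ u * Lam b c H * (4 * τ) := by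
    rw [← div_le_iff₀ (by linarith : (0:ℝ) < 4 * τ)]
    linarith
  have hbc : b + c = 1 - d - u := by rw [hu]; linarith
  have hstep : (1 - d) ^ 2 ≤ 4 * u * (b + c - τ * J) := by
    nlinarith [mul_le_mul_of_nonneg_left hbound (by linarith : (0:ℝ) ≤ 4 * u)]
  have hsq : (2 * u - (1 - d)) ^ 2 + 4 * u * (τ * J) ≤ 0 := by nlinarith
  have hJzero : J = 0 := by
    have hJle : J ≤ 0 := by nlinarith [sq_nonneg (2 * u - (1 - d)), mul_pos hud hτ0]
    linarith
  have huval : u = (1 - d) / 2 := by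
    have h0 : 4 * u * (τ * J) = 0 := by rw [hJzero]; ring
    have h4 : (2 * u - (1 - d)) ^ 2 ≤ 0 := by linarith
    have h5 : (2 * u - (1 - d)) ^ 2 = 0 := le_antisymm h4 (sq_nonneg _)
    have h6 := pow_eq_zero_iff (n := 2) (by norm_num) |>.mp h5
    linarith
  have hmin : min b c = 0 := by
    by_contra hne
    have hpos : 0 < min b c := lt_of_le_of_ne (le_min hB hC) (Ne.symm hne)
    have := hA1 (min b c) hpos
    rw [← hJ] at this
    linarith
  refine ⟨by rw [ha]; linarith, ?_, hmin⟩
  have := min_add_max b c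
  linarith

set_option maxHeartbeats 1000000 in
/-- Along any subsequence of maximizers converging to `sl`, the limiting modified payoff of `sl`
must be at least the optimal value `d + (1-d)²/(4τ)`. -/
lemma payHat_lower_bound
    {τ : ℝ} (hτ : 1 / 2 ≤ τ)
    {H : Measure (ℝ × ℝ)} (hHprob : IsProbabilityMeasure H)
    (hmarg1 : H.map Prod.fst = uniformIcc τ)
    {d : ℝ} (hd0 : 0 ≤ d) (hd1 : d < 1)
    {Hn : ℕ → Measure (ℝ × ℝ)} (hHnprob : ∀ n, IsProbabilityMeasure (Hn n))
    (hweak : WeakLim Hn H)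
    {dn : ℕ → ℝ} (hdn : Tendsto dn atTop (nhds d))
    {sn : ℕ → ℝ × ℝ × ℝ} (hsn : ∀ n, sn n ∈ SimplexS)
    (hmax : ∀ n, ∀ s ∈ SimplexS, pay s (Hn n) (dn n) ≤ pay (sn n) (Hn n) (dn n))
    {φ : ℕ → ℕ} (hφ : Tendsto φ atTop atTop)
    {sl : ℝ × ℝ × ℝ} (hsl : sl ∈ SimplexS)
    (hconv : Tendsto (fun k => sn (φ k)) atTop (nhds sl)) :
    d + (1 - d) ^ 2 / (4 * τ) ≤ payHat sl H d := by
  haveI := hHprob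
  have hτ0 : (0 : ℝ) < τ := by linarith
  obtain ⟨hA, hB, hC, hsum⟩ := hsl
  -- probability measure versions and weak convergence along φ
  set P : ProbabilityMeasure (ℝ × ℝ) := ⟨H, hHprob⟩ with hP
  set Pn : ℕ → ProbabilityMeasure (ℝ × ℝ) := fun n => ⟨Hn n, hHnprob n⟩ with hPn
  have htend : Tendsto Pn atTop (nhds P) :=
    ProbabilityMeasure.tendsto_iff_forall_integral_tendsto.mpr hweak
  have htendφ : Tendsto (fun k => Pn (φ k)) atTop (nhds P) := htend.comp hφ
  -- component convergences
  have haφ : Tendsto (fun k => (sn (φ k)).1) atTop (nhds sl.1) :=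
    (continuous_fst.tendsto sl).comp hconv
  have hbφ : Tendsto (fun k => (sn (φ k)).2.1) atTop (nhds sl.2.1) :=
    ((continuous_fst.comp continuous_snd).tendsto sl).comp hconv
  have hcφ : Tendsto (fun k => (sn (φ k)).2.2) atTop (nhds sl.2.2) :=
    ((continuous_snd.comp continuous_snd).tendsto sl).comp hconv
  have hdnφ : Tendsto (fun k => dn (φ k)) atTop (nhds d) := hdn.comp hφ
  -- reduce to ε-argument
  suffices h : ∀ ε : ℝ, 0 < ε → d + (1 - d) ^ 2 / (4 * τ) ≤ payHat sl H d + 2 * ε by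
    refine le_of_forall_pos_le_add fun ε hε => ?_
    have := h (ε / 2) (by linarith)
    linarith
  intro ε hε
  ------------------------------------------------------------------
  -- UPPER BOUND: eventually pay (sn (φ k)) (Hn (φ k)) (dn (φ k)) ≤ payHat sl H d + ε
  ------------------------------------------------------------------
  set K : ℝ → Set (ℝ × ℝ) := fun δ => {p | p.1 ≤ sl.2.1 + δ ∨ p.2 ≤ sl.2.2 + δ} with hK
  have hKmeas : ∀ δ, MeasurableSet (K δ) := fun δ =>
    (measurable_fst measurableSet_Iic).union (measurable_snd measurableSet_Iic)
  have hKmono : ∀ {δ δ' : ℝ}, δ ≤ δ' → K δ ⊆ K δ' := by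
    intro δ δ' hδ p hp
    rcases hp with h | h
    · exact Or.inl (by linarith)
    · exact Or.inr (by linarith)
  have hKinter : ⋂ j : ℕ, K (1 / (j + 1)) = K 0 := by
    ext p
    simp only [Set.mem_iInter]
    constructor
    · intro hp
      by_contra hcon
      rw [hK] at hcon
      simp only [Set.mem_setOf_eq, add_zero, not_or, not_le] at hcon
      obtain ⟨h1, h2⟩ := hcon
      obtain ⟨j, hj⟩ := exists_nat_one_div_lt (lt_min (by linarith : (0:ℝ) < p.1 - sl.2.1)
        (by linarith : (0:ℝ) < p.2 - sl.2.2))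
      rcases hp j with h | h
      · have := lt_of_lt_of_le hj (min_le_left _ _)
        linarith
      · have := lt_of_lt_of_le hj (min_le_right _ _)
        linarith
    · intro hp j
      exact hKmono (by positivity) hp
  have hKtend : Tendsto (fun j : ℕ => (H (K (1 / (j + 1)))).toReal) atTop
      (nhds ((H (K 0)).toReal)) := by
    have h1 : Tendsto (fun j : ℕ => H (K (1 / (j + 1)))) atTop
        (nhds (H (⋂ j : ℕ, K (1 / (j + 1))))) := by
      apply tendsto_measure_iInter_atTop (fun j => (hKmeas _).nullMeasurableSet)
      · intro i j hij
        exact hKmono (by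
          apply div_le_div_of_nonneg_left (by norm_num) (by positivity)
          exact_mod_cast by exact_mod_cast add_le_add_left (Nat.cast_le.mpr hij) 1)
      · exact ⟨0, measure_ne_top H _⟩
    rw [hKinter] at h1
    exact (ENNReal.tendsto_toReal (measure_ne_top H _)).comp h1
  have hK0 : (H (K 0)).toReal = Lam sl.2.1 sl.2.2 H := by
    rw [Lam, hK]; norm_num
  obtain ⟨j0, hj0⟩ : ∃ j0 : ℕ, (H (K (1 / (j0 + 1)))).toReal < Lam sl.2.1 sl.2.2 H + ε / 4 := by
    have := hKtend.eventually_lt_const (by rw [hK0]; linarith :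
      (H (K 0)).toReal < Lam sl.2.1 sl.2.2 H + ε / 4)
    exact this.exists
  set δ0 : ℝ := 1 / (j0 + 1) with hδ0def
  have hδ0 : 0 < δ0 := by positivity
  -- portmanteau: closed set K δ0
  have hKclosed : IsClosed (K δ0) :=
    (isClosed_Iic.preimage continuous_fst).union (isClosed_Iic.preimage continuous_snd)
  have hlimsup : Filter.limsup (fun k => Hn (φ k) (K δ0)) atTop ≤ H (K δ0) :=
    ProbabilityMeasure.limsup_measure_closed_le_of_tendsto htendφ hKclosed
  have hev2 : ∀ᶠ k in atTop, Hn (φ k) (K δ0) < H (K δ0) + ENNReal.ofReal (ε / 4) := by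
    refine eventually_lt_of_limsup_lt ?_ ?_
    · exact lt_of_le_of_lt hlimsup (ENNReal.lt_add_right (measure_ne_top H _)
        (by simp [ENNReal.ofReal_eq_zero]; linarith))
    · isBoundedDefault
  have hevb : ∀ᶠ k in atTop, (sn (φ k)).2.1 < sl.2.1 + δ0 :=
    hbφ.eventually_lt_const (by linarith)
  have hevc : ∀ᶠ k in atTop, (sn (φ k)).2.2 < sl.2.2 + δ0 :=
    hcφ.eventually_lt_const (by linarith)
  have hevΛ : ∀ᶠ k in atTop,
      Lam (sn (φ k)).2.1 (sn (φ k)).2.2 (Hn (φ k)) ≤ Lam sl.2.1 sl.2.2 H + ε / 2 := by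
    filter_upwards [hev2, hevb, hevc] with k h2 hb' hc'
    haveI := hHnprob (φ k)
    have hsub : {p : ℝ × ℝ | p.1 ≤ (sn (φ k)).2.1 ∨ p.2 ≤ (sn (φ k)).2.2} ⊆ K δ0 := by
      intro p hp
      rcases hp with h | h
      · exact Or.inl (by linarith)
      · exact Or.inr (by linarith)
    have h3 : Lam (sn (φ k)).2.1 (sn (φ k)).2.2 (Hn (φ k)) ≤ (Hn (φ k) (K δ0)).toReal :=
      ENNReal.toReal_mono (measure_ne_top _ _) (measure_mono hsub)
    have h4 : (Hn (φ k) (K δ0)).toReal ≤ (H (K δ0)).toReal + ε / 4 := by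
      have := ENNReal.toReal_mono (by finiteness) h2.le
      rwa [ENNReal.toReal_add (measure_ne_top H _) ENNReal.ofReal_ne_top,
        ENNReal.toReal_ofReal (by linarith)] at this
    calc Lam (sn (φ k)).2.1 (sn (φ k)).2.2 (Hn (φ k)) ≤ (H (K δ0)).toReal + ε / 4 := by linarith
    _ ≤ Lam sl.2.1 sl.2.2 H + ε / 4 + ε / 4 := by linarith [hj0]
    _ ≤ Lam sl.2.1 sl.2.2 H + ε / 2 := by linarith
  -- now the upper bound for pay
  have hTlim : Tendsto (fun k => dn (φ k) + max ((sn (φ k)).1 - dn (φ k)) 0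
      * (Lam sl.2.1 sl.2.2 H + ε / 2)) atTop
      (nhds (d + max (sl.1 - d) 0 * (Lam sl.2.1 sl.2.2 H + ε / 2))) :=
    hdnφ.add (((haφ.sub hdnφ).max tendsto_const_nhds).mul_const _)
  have hupper : ∀ᶠ k in atTop,
      pay (sn (φ k)) (Hn (φ k)) (dn (φ k)) ≤ payHat sl H d + ε := by
    have hTev : ∀ᶠ k in atTop, dn (φ k) + max ((sn (φ k)).1 - dn (φ k)) 0
        * (Lam sl.2.1 sl.2.2 H + ε / 2)
        < d + max (sl.1 - d) 0 * (Lam sl.2.1 sl.2.2 H + ε / 2) + ε / 4 :=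
      hTlim.eventually_lt_const (by linarith)
    filter_upwards [hevΛ, hTev] with k h1 h2
    have hΛ0 : 0 ≤ Lam (sn (φ k)).2.1 (sn (φ k)).2.2 (Hn (φ k)) := ENNReal.toReal_nonneg
    have step1 : pay (sn (φ k)) (Hn (φ k)) (dn (φ k)) ≤ dn (φ k)
        + max ((sn (φ k)).1 - dn (φ k)) 0 * Lam (sn (φ k)).2.1 (sn (φ k)).2.2 (Hn (φ k)) := by
      rw [pay]
      have := mul_le_mul_of_nonneg_right (le_max_left ((sn (φ k)).1 - dn (φ k)) 0) hΛ0
      linarith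
    have step2 : max ((sn (φ k)).1 - dn (φ k)) 0 * Lam (sn (φ k)).2.1 (sn (φ k)).2.2 (Hn (φ k))
        ≤ max ((sn (φ k)).1 - dn (φ k)) 0 * (Lam sl.2.1 sl.2.2 H + ε / 2) :=
      mul_le_mul_of_nonneg_left h1 (le_max_right _ _)
    have hmaxle : max (sl.1 - d) 0 ≤ 1 := by
      apply max_le _ zero_le_one
      linarith
    have hΛsl0 : 0 ≤ Lam sl.2.1 sl.2.2 H := ENNReal.toReal_nonneg
    have step3 : d + max (sl.1 - d) 0 * (Lam sl.2.1 sl.2.2 H + ε / 2)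
        ≤ payHat sl H d + ε / 2 := by
      rw [payHat]
      have h5 : max (sl.1 - d) 0 * (ε / 2) ≤ 1 * (ε / 2) :=
        mul_le_mul_of_nonneg_right hmaxle (by linarith)
      nlinarith [le_max_right (sl.1 - d) (0:ℝ)]
    linarith
  ------------------------------------------------------------------
  -- LOWER BOUND: eventually d + (1-d)^2/(4τ) - ε ≤ pay (sn (φ k)) ...
  ------------------------------------------------------------------
  set b' : ℝ := (1 - d) / 2 with hb'def
  have hb'pos : 0 < b' := by rw [hb'def]; linarith
  have hb'τ : b' ≤ τ := by rw [hb'def]; linarith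
  have hb'le : b' ≤ 1 / 2 := by rw [hb'def]; linarith
  set U : Set (ℝ × ℝ) := {p | p.1 < b'} with hU
  have hUopen : IsOpen U := isOpen_Iio.preimage continuous_fst
  have hHU : H U = ENNReal.ofReal (b' / τ) := by
    rw [hU, H_fst_Iio hmarg1, uniformIcc_Iio hτ0 hb'pos.le hb'τ]
  have hliminf : H U ≤ Filter.liminf (fun k => Hn (φ k) U) atTop :=
    ProbabilityMeasure.le_liminf_measure_open_of_tendsto htendφ hUopen
  set δ : ℝ := min (ε / 4) (min (b' / (2 * τ)) ((1 - d) / 4)) with hδdef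
  have hδpos : 0 < δ := by
    apply lt_min (by linarith) (lt_min (by positivity) (by linarith))
  have hδ1 : δ ≤ ε / 4 := min_le_left _ _
  have hδ2 : δ ≤ b' / (2 * τ) := le_trans (min_le_right _ _) (min_le_left _ _)
  have hδ3 : δ ≤ (1 - d) / 4 := le_trans (min_le_right _ _) (min_le_right _ _)
  have hb'τδ : 0 < b' / τ - δ := by
    have : b' / (2 * τ) < b' / τ := by
      apply div_lt_div_of_pos_left hb'pos hτ0
      linarith
    linarith
  have hev3 : ∀ᶠ k in atTop, ENNReal.ofReal (b' / τ - δ) < Hn (φ k) U := by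
    refine eventually_lt_of_lt_liminf ?_ ?_
    · apply lt_of_lt_of_le _ hliminf
      rw [hHU]
      exact ENNReal.ofReal_lt_ofReal_iff (by positivity) |>.mpr (by linarith)
    · isBoundedDefault
  have hev4 : ∀ᶠ k in atTop, |dn (φ k) - d| < δ := by
    have := Metric.tendsto_nhds.mp hdnφ δ hδpos
    simpa [Real.dist_eq] using this
  have hs'S : ((1 : ℝ) - b', b', (0 : ℝ)) ∈ SimplexS := by
    refine ⟨show (0:ℝ) ≤ 1 - b' by linarith, show (0:ℝ) ≤ b' from hb'pos.le,
      le_refl (0:ℝ), show (1 - b') + b' + 0 = 1 by ring⟩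
  have hlower : ∀ᶠ k in atTop,
      d + (1 - d) ^ 2 / (4 * τ) - ε ≤ pay (sn (φ k)) (Hn (φ k)) (dn (φ k)) := by
    filter_upwards [hev3, hev4] with k h3 h4
    haveI := hHnprob (φ k)
    have habs := abs_lt.mp h4
    have hUsub : U ⊆ {p : ℝ × ℝ | p.1 ≤ b' ∨ p.2 ≤ 0} := by
      intro p hp
      exact Or.inl (le_of_lt hp)
    have hLam1 : b' / τ - δ ≤ Lam b' 0 (Hn (φ k)) := by
      have h5 : ENNReal.ofReal (b' / τ - δ) ≤ Hn (φ k) {p : ℝ × ℝ | p.1 ≤ b' ∨ p.2 ≤ 0} :=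
        le_trans h3.le (measure_mono hUsub)
      have h6 := ENNReal.toReal_mono (measure_ne_top _ _) h5
      rwa [ENNReal.toReal_ofReal hb'τδ.le] at h6
    have hpay' : pay ((1 : ℝ) - b', b', (0 : ℝ)) (Hn (φ k)) (dn (φ k))
        ≤ pay (sn (φ k)) (Hn (φ k)) (dn (φ k)) := hmax (φ k) _ hs'S
    have hfac : (1 - d) / 2 - δ ≤ 1 - b' - dn (φ k) := by
      rw [hb'def]; linarith
    have hfacpos : 0 ≤ (1 - d) / 2 - δ := by linarith
    have hΛub : Lam b' 0 (Hn (φ k)) ≤ 1 := by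
      rw [Lam]
      refine ENNReal.toReal_le_of_le_ofReal zero_le_one ?_
      rw [ENNReal.ofReal_one]
      exact prob_le_one
    have hpayval : dn (φ k) + (1 - b' - dn (φ k)) * Lam b' 0 (Hn (φ k))
        ≤ pay (sn (φ k)) (Hn (φ k)) (dn (φ k)) := by
      rw [show pay ((1:ℝ) - b', b', (0:ℝ)) (Hn (φ k)) (dn (φ k))
        = dn (φ k) + (1 - b' - dn (φ k)) * Lam b' 0 (Hn (φ k)) from rfl] at hpay'
      exact hpay'
    have hprod : ((1 - d) / 2 - δ) * (b' / τ - δ)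
        ≤ (1 - b' - dn (φ k)) * Lam b' 0 (Hn (φ k)) :=
      mul_le_mul hfac hLam1 hb'τδ.le (by linarith)
    have hbτ1 : b' / τ ≤ 1 := by
      rw [div_le_one hτ0]; linarith
    have hcalc : d + (1 - d) ^ 2 / (4 * τ) - ε
        ≤ (d - δ) + ((1 - d) / 2 - δ) * (b' / τ - δ) := by
      have hval : (1 - d) ^ 2 / (4 * τ) = (1 - d) / 2 * (b' / τ) := by
        rw [hb'def]; ring
      nlinarith [hδpos, hδ1, hbτ1, hδ3, mul_nonneg hδpos.le hδpos.le]
    linarith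
  -- combine
  obtain ⟨k, hk1, hk2⟩ := (hupper.and hlower).exists
  linarith

lemma simplex_isClosed : IsClosed SimplexS := by
  have h1 : IsClosed {s : ℝ × ℝ × ℝ | 0 ≤ s.1} := isClosed_le continuous_const continuous_fst
  have h2 : IsClosed {s : ℝ × ℝ × ℝ | 0 ≤ s.2.1} :=
    isClosed_le continuous_const (continuous_fst.comp continuous_snd)
  have h3 : IsClosed {s : ℝ × ℝ × ℝ | 0 ≤ s.2.2} :=
    isClosed_le continuous_const (continuous_snd.comp continuous_snd)
  have h4 : IsClosed {s : ℝ × ℝ × ℝ | s.1 + s.2.1 + s.2.2 = 1} :=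
    isClosed_eq (((continuous_fst.add (continuous_fst.comp continuous_snd)).add
      (continuous_snd.comp continuous_snd))) continuous_const
  rw [show SimplexS = {s : ℝ × ℝ × ℝ | 0 ≤ s.1} ∩ ({s | 0 ≤ s.2.1} ∩ ({s | 0 ≤ s.2.2}
    ∩ {s | s.1 + s.2.1 + s.2.2 = 1})) from rfl]
  exact h1.inter (h2.inter (h3.inter h4))

lemma simplex_isCompact : IsCompact SimplexS := by
  have hbox : IsCompact ((Set.Icc (0:ℝ) 1) ×ˢ ((Set.Icc (0:ℝ) 1) ×ˢ (Set.Icc (0:ℝ) 1))) :=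
    isCompact_Icc.prod (isCompact_Icc.prod isCompact_Icc)
  apply hbox.of_isClosed_subset simplex_isClosed
  rintro ⟨a, b, c⟩ ⟨hA, hB, hC, hsum⟩
  simp only [Set.mem_prod, Set.mem_Icc]
  refine ⟨⟨hA, ?_⟩, ⟨hB, ?_⟩, ⟨hC, ?_⟩⟩ <;> simp only [] at hA hB hC hsum <;> linarith

theorem stmt0
    (τ : ℝ) (hτ : 1 / 2 ≤ τ)
    (H : Measure (ℝ × ℝ)) (hHprob : IsProbabilityMeasure H)
    (hconc : H ((Set.Icc (0 : ℝ) τ ×ˢ Set.Icc (0 : ℝ) τ)ᶜ) = 0)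
    (hmarg1 : H.map Prod.fst = uniformIcc τ)
    (hmarg2 : H.map Prod.snd = uniformIcc τ)
    (hA1 : ∀ x > (0 : ℝ), 0 < jointCDF H x x)
    (d : ℝ) (hd0 : 0 ≤ d) (hd1 : d < 1)
    (Hn : ℕ → Measure (ℝ × ℝ)) (hHnprob : ∀ n, IsProbabilityMeasure (Hn n))
    (hweak : WeakLim Hn H)
    (dn : ℕ → ℝ) (hdn : Tendsto dn atTop (nhds d))
    (sn : ℕ → ℝ × ℝ × ℝ)
    (hsn : ∀ n, sn n ∈ SimplexS)
    (hmax : ∀ n, ∀ s ∈ SimplexS, pay s (Hn n) (dn n) ≤ pay (sn n) (Hn n) (dn n)) :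
    Tendsto (fun n => (sn n).1) atTop (nhds ((1 + d) / 2)) ∧
    Tendsto (fun n => max (sn n).2.1 (sn n).2.2) atTop (nhds ((1 - d) / 2)) ∧
    Tendsto (fun n => min (sn n).2.1 (sn n).2.2) atTop (nhds 0) := by
  have key : Tendsto (fun n => ((sn n).1, max (sn n).2.1 (sn n).2.2, min (sn n).2.1 (sn n).2.2))
      atTop (nhds (((1 + d) / 2, (1 - d) / 2, 0) : ℝ × ℝ × ℝ)) := by
    apply tendsto_of_subseq_tendsto
    intro ns hns
    obtain ⟨sl, hslS, ms, hmsmono, hconv⟩ :=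
      simplex_isCompact.tendsto_subseq (fun k => hsn (ns k))
    refine ⟨ms, ?_⟩
    have hφ : Tendsto (fun k => ns (ms k)) atTop atTop := hns.comp hmsmono.tendsto_atTop
    have hconv' : Tendsto (fun k => sn (ns (ms k))) atTop (nhds sl) := hconv
    have hlb := payHat_lower_bound hτ hHprob hmarg1 hd0 hd1 hHnprob hweak hdn hsn hmax
      hφ hslS hconv'
    obtain ⟨h1, h2, h3⟩ := unique_max hτ hHprob hmarg1 hmarg2 hA1 hd0 hd1 hslS hlb
    have hg : Continuous (fun s : ℝ × ℝ × ℝ => (s.1, max s.2.1 s.2.2, min s.2.1 s.2.2)) :=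
      continuous_fst.prodMk
        (((continuous_fst.comp continuous_snd).max (continuous_snd.comp continuous_snd)).prodMk
         ((continuous_fst.comp continuous_snd).min (continuous_snd.comp continuous_snd)))
    have hcomp := (hg.tendsto sl).comp hconv'
    rw [show ((((1 : ℝ) + d) / 2, (1 - d) / 2, (0:ℝ)) : ℝ × ℝ × ℝ)
      = (sl.1, max sl.2.1 sl.2.2, min sl.2.1 sl.2.2) by rw [h1, h2, h3]]
    exact hcomp
  exact ⟨(continuous_fst.tendsto _).comp key,
    ((continuous_fst.comp continuous_snd).tendsto _).comp key,
    ((continuous_snd.comp continuous_snd).tendsto _).comp key⟩
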